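/- Let n ≥ 1 and L ≥ n be integers and set γ = (n/(L+1))^{1/(L-n+1)}. Run Peek Search with latency L and discount factor γ on an n-th order time-homogeneous Markov reward instance whose transition digraph is complete (diameter Δ = 1). Then OPT ≤ ((L+1)/(L-n+1))·((L+1)/n)^{n/(L-n+1)}·ON; that is, the competitive ratio of Peek Search is at most ((L+1)/(L-n+1))·((L+1)/n)^{n/(L-n+1)}. -/

import Mathlib

open Finset

/-- Peek Search with latency L ≥ n and discount γ = (n/(L+1))^{1/(L−n+1)} on an
n-th order time-homogeneous instance with complete transition digraph (Δ = 1) is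
((L+1)/(L−n+1))·((L+1)/n)^{n/(L−n+1)}-competitive.

`R h y` is the (nonnegative, time-homogeneous) reward of moving to state `y` when the `n`
preceding states are `h 0, …, h (n-1)` (in chronological order); `r t` is the effective reward
function at time `t`: it equals `R` on the horizon away from the first `L+1` and last `L+1`
time steps (zero padding) and is `0` elsewhere.  `d` gives the dummy initial states at times
`≤ 0`.  `yhat` is the sequence produced by Peek Search: at each time `i ∈ {1,…,T}` there is a
sequence agreeing with `yhat` strictly before `i` and starting with `yhat i` at `i`, whose
`γ`-discounted reward over the window `{i,…,i+L}` is maximal among all such sequences.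
The conclusion bounds the total reward of every offline sequence starting from the dummy
states, hence bounds OPT. -/
theorem peek_search_competitive_nth_order_complete
    (K : Type) [Fintype K] [Nonempty K]
    (n : ℕ) (hn : 1 ≤ n)
    (L : ℕ) (hL : n ≤ L)
    (γ : ℝ) (hγ : γ = ((n : ℝ) / ((L : ℝ) + 1)) ^ ((1 : ℝ) / ((L : ℝ) - (n : ℝ) + 1)))
    (T : ℤ)
    (R : (Fin n → K) → K → ℝ) (hR : ∀ h y, 0 ≤ R h y)
    (r : ℤ → (Fin n → K) → K → ℝ)
    (hr : ∀ t : ℤ, r t = if ((L : ℤ) + 2 ≤ t ∧ t ≤ T - ((L : ℤ) + 1)) then R else 0)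
    (d : ℤ → K)
    (yhat : ℤ → K) (hyhat0 : ∀ t : ℤ, t ≤ 0 → yhat t = d t)
    (hPS : ∀ i : ℤ, 1 ≤ i → i ≤ T →
      ∃ y : ℤ → K, (∀ t : ℤ, t < i → y t = yhat t) ∧ y i = yhat i ∧
        ∀ y' : ℤ → K, (∀ t : ℤ, t < i → y' t = yhat t) →
          (∑ j ∈ Finset.range (L + 1),
              γ ^ j * r (i + (j : ℤ))
                (fun k : Fin n => y' (i + (j : ℤ) - (n : ℤ) + ((k : ℕ) : ℤ)))
                (y' (i + (j : ℤ))))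
            ≤ ∑ j ∈ Finset.range (L + 1),
                γ ^ j * r (i + (j : ℤ))
                  (fun k : Fin n => y (i + (j : ℤ) - (n : ℤ) + ((k : ℕ) : ℤ)))
                  (y (i + (j : ℤ))))
    (ON : ℝ)
    (hON : ON = ∑ i ∈ Finset.Icc (1 : ℤ) T,
        r i (fun k : Fin n => yhat (i - (n : ℤ) + ((k : ℕ) : ℤ))) (yhat i)) :
    ∀ y : ℤ → K, (∀ t : ℤ, t ≤ 0 → y t = d t) →
      (∑ i ∈ Finset.Icc (1 : ℤ) T,
          r i (fun k : Fin n => y (i - (n : ℤ) + ((k : ℕ) : ℤ))) (y i))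
        ≤ (((L : ℝ) + 1) / ((L : ℝ) - (n : ℝ) + 1)) *
            (((L : ℝ) + 1) / (n : ℝ)) ^ ((n : ℝ) / ((L : ℝ) - (n : ℝ) + 1)) * ON := by
  classical
  intro y hy
  rcases lt_or_ge T 1 with hT | hT
  · have hempty : Finset.Icc (1:ℤ) T = ∅ := Finset.Icc_eq_empty (by omega)
    simp only [hempty, Finset.sum_empty] at hON ⊢
    rw [hON, mul_zero]
  -- basic facts
  have hnR : (1:ℝ) ≤ (n:ℝ) := by exact_mod_cast hn
  have hLR : (n:ℝ) ≤ (L:ℝ) := by exact_mod_cast hL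
  set a : ℝ := (n : ℝ) / ((L : ℝ) + 1) with ha
  set d' : ℝ := (L : ℝ) - (n : ℝ) + 1 with hd'
  set en : ℝ := (n : ℝ) / d' with hen
  have hL1 : (0:ℝ) < (L:ℝ) + 1 := by positivity
  have hL1ne : ((L:ℝ) + 1) ≠ 0 := ne_of_gt hL1
  have hd'1 : (1:ℝ) ≤ d' := by rw [hd']; linarith
  have hd'0 : (0:ℝ) < d' := lt_of_lt_of_le one_pos hd'1
  have hd'ne : d' ≠ 0 := ne_of_gt hd'0
  have hnR0 : (0:ℝ) < (n:ℝ) := by linarith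
  have hnne : (n:ℝ) ≠ 0 := ne_of_gt hnR0
  have ha0 : 0 < a := by rw [ha]; exact div_pos hnR0 hL1
  have ha1 : a < 1 := by rw [ha, div_lt_one hL1]; linarith
  have hγ0 : 0 < γ := by rw [hγ]; exact Real.rpow_pos_of_pos ha0 _
  have hγ1 : γ < 1 := by rw [hγ]; exact Real.rpow_lt_one ha0.le ha1 (div_pos one_pos hd'0)
  -- reward facts
  have hrnn : ∀ (t : ℤ) (h : Fin n → K) (z : K), 0 ≤ r t h z := by
    intro t h z
    rw [hr t]
    split_ifs
    · exact hR h z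
    · simp
  have hrz : ∀ t : ℤ, ¬((L:ℤ) + 2 ≤ t ∧ t ≤ T - ((L:ℤ) + 1)) → ∀ (h : Fin n → K) (z : K),
      r t h z = 0 := by
    intro t ht h z
    rw [hr t, if_neg ht]
    rfl
  -- the offline reward function
  set F : ℤ → ℝ := fun t => r t (fun k : Fin n => y (t - (n:ℤ) + ((k:ℕ):ℤ))) (y t) with hF
  -- choose the peek-search paths
  choose! P hP1 hP2 hP3 using hPS
  -- the window value
  set Λ : ℤ → ℝ := fun i => if 1 ≤ i ∧ i ≤ T then
      ∑ j ∈ Finset.range (L+1), γ ^ j * r (i + (j:ℤ))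
        (fun k : Fin n => P i (i + (j:ℤ) - (n:ℤ) + ((k:ℕ):ℤ))) (P i (i + (j:ℤ)))
    else 0 with hΛ
  have hΛeq : ∀ i : ℤ, 1 ≤ i → i ≤ T → Λ i =
      ∑ j ∈ Finset.range (L+1), γ ^ j * r (i + (j:ℤ))
        (fun k : Fin n => P i (i + (j:ℤ) - (n:ℤ) + ((k:ℕ):ℤ))) (P i (i + (j:ℤ))) := by
    intro i h1 h2
    simp only [hΛ]
    rw [if_pos ⟨h1, h2⟩]
  have hΛnn : ∀ i : ℤ, 0 ≤ Λ i := by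
    intro i
    simp only [hΛ]
    split_ifs
    · exact Finset.sum_nonneg fun j _ => mul_nonneg (pow_nonneg hγ0.le _) (hrnn _ _ _)
    · exact le_refl 0
  set S : ℝ := ∑ i ∈ Finset.Icc (1:ℤ) T, Λ i with hS
  -- generic shift of sums
  have hshift : ∀ (cc : ℤ) (g : ℤ → ℝ) (A B : ℤ),
      (∑ t ∈ Finset.Icc (A+cc) (B+cc), g t) = ∑ i ∈ Finset.Icc A B, g (i+cc) := by
    intro cc g A B
    have himg : Finset.Icc (A+cc) (B+cc) = Finset.image (fun i => i + cc) (Finset.Icc A B) := by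
      ext t
      simp only [Finset.mem_image, Finset.mem_Icc]
      constructor
      · intro h; exact ⟨t - cc, ⟨by omega, by omega⟩, by omega⟩
      · rintro ⟨u, hu, rfl⟩; omega
    rw [himg]
    exact Finset.sum_image fun x _ z _ h => by omega
  -- vanishing outside the core
  have hcore : ∀ A B : ℤ, A ≤ (L:ℤ) + 2 → T - (L:ℤ) - 1 ≤ B →
      (∑ t ∈ Finset.Icc A B, F t) = ∑ t ∈ Finset.Icc ((L:ℤ)+2) (T - (L:ℤ) - 1), F t := by
    intro A B hA hB
    symm
    apply Finset.sum_subset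
    · intro t ht
      rw [Finset.mem_Icc] at *
      omega
    · intro t ht hnt
      rw [Finset.mem_Icc] at hnt
      simp only [hF]
      exact hrz t (by omega) _ _
  -- recurrence Λ i ≤ ρ i + γ Λ (i+1)
  have hrec : ∀ i : ℤ, 1 ≤ i → i ≤ T →
      Λ i ≤ r i (fun k : Fin n => yhat (i - (n:ℤ) + ((k:ℕ):ℤ))) (yhat i) + γ * Λ (i+1) := by
    intro i hi1 hiT
    have h0term : γ ^ 0 * r (i + ((0:ℕ):ℤ))
        (fun k : Fin n => P i (i + ((0:ℕ):ℤ) - (n:ℤ) + ((k:ℕ):ℤ))) (P i (i + ((0:ℕ):ℤ)))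
        = r i (fun k : Fin n => yhat (i - (n:ℤ) + ((k:ℕ):ℤ))) (yhat i) := by
      have e0 : i + ((0:ℕ):ℤ) = i := by simp
      have hhist : (fun k : Fin n => P i (i - (n:ℤ) + ((k:ℕ):ℤ)))
          = fun k : Fin n => yhat (i - (n:ℤ) + ((k:ℕ):ℤ)) := by
        funext k
        exact hP1 i hi1 hiT _ (by have hk : (k:ℕ) < n := k.isLt; omega)
      rw [pow_zero, one_mul, e0, hhist, hP2 i hi1 hiT]
    by_cases hiT' : i + 1 ≤ T
    · have hfeas : ∀ t : ℤ, t < i + 1 → P i t = yhat t := by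
        intro t ht
        rcases lt_or_eq_of_le (show t ≤ i by omega) with h | h
        · exact hP1 i hi1 hiT t h
        · rw [h]; exact hP2 i hi1 hiT
      have htail : (∑ x ∈ Finset.range L, γ ^ (x+1) * r (i + ((x+1:ℕ):ℤ))
            (fun k : Fin n => P i (i + ((x+1:ℕ):ℤ) - (n:ℤ) + ((k:ℕ):ℤ))) (P i (i + ((x+1:ℕ):ℤ))))
          ≤ γ * Λ (i+1) := by
        have hg : ∀ x ∈ Finset.range L, γ ^ (x+1) * r (i + ((x+1:ℕ):ℤ))
            (fun k : Fin n => P i (i + ((x+1:ℕ):ℤ) - (n:ℤ) + ((k:ℕ):ℤ))) (P i (i + ((x+1:ℕ):ℤ)))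
            = γ * (γ ^ x * r ((i+1) + (x:ℤ))
                (fun k : Fin n => P i ((i+1) + (x:ℤ) - (n:ℤ) + ((k:ℕ):ℤ))) (P i ((i+1) + (x:ℤ)))) := by
          intro x _
          have e : i + ((x+1:ℕ):ℤ) = (i+1) + (x:ℤ) := by push_cast; ring
          rw [e, pow_succ]
          ring
        rw [Finset.sum_congr rfl hg, ← Finset.mul_sum]
        apply mul_le_mul_of_nonneg_left _ hγ0.le
        calc (∑ x ∈ Finset.range L, γ ^ x * r ((i+1) + (x:ℤ))
              (fun k : Fin n => P i ((i+1) + (x:ℤ) - (n:ℤ) + ((k:ℕ):ℤ))) (P i ((i+1) + (x:ℤ))))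
            ≤ ∑ x ∈ Finset.range (L+1), γ ^ x * r ((i+1) + (x:ℤ))
              (fun k : Fin n => P i ((i+1) + (x:ℤ) - (n:ℤ) + ((k:ℕ):ℤ))) (P i ((i+1) + (x:ℤ))) :=
              Finset.sum_le_sum_of_subset_of_nonneg (Finset.range_subset_range.2 (by omega))
                (fun x _ _ => mul_nonneg (pow_nonneg hγ0.le _) (hrnn _ _ _))
          _ ≤ Λ (i+1) := by
              rw [hΛeq (i+1) (by omega) hiT']
              exact hP3 (i+1) (by omega) hiT' (P i) hfeas
      have hsplit : Λ i = (∑ x ∈ Finset.range L, γ ^ (x+1) * r (i + ((x+1:ℕ):ℤ))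
            (fun k : Fin n => P i (i + ((x+1:ℕ):ℤ) - (n:ℤ) + ((k:ℕ):ℤ))) (P i (i + ((x+1:ℕ):ℤ))))
          + γ ^ 0 * r (i + ((0:ℕ):ℤ))
            (fun k : Fin n => P i (i + ((0:ℕ):ℤ) - (n:ℤ) + ((k:ℕ):ℤ))) (P i (i + ((0:ℕ):ℤ))) := by
        rw [hΛeq i hi1 hiT]
        exact Finset.sum_range_succ' _ L
      rw [hsplit]
      linarith [htail, h0term.le, h0term.ge]
    · have hz : Λ i = 0 := by
        rw [hΛeq i hi1 hiT]
        apply Finset.sum_eq_zero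
        intro j _
        have hj0 : (0:ℤ) ≤ (j:ℤ) := Int.natCast_nonneg _
        rw [hrz (i + (j:ℤ)) (by omega) _ _, mul_zero]
      have hz1 : Λ (i+1) = 0 := by
        simp only [hΛ]
        rw [if_neg (by omega)]
      rw [hz, hz1, mul_zero, add_zero]
      exact hrnn _ _ _
  -- upper bound on S
  have hONs : (∑ i ∈ Finset.Icc (1:ℤ) T,
      r i (fun k : Fin n => yhat (i - (n:ℤ) + ((k:ℕ):ℤ))) (yhat i)) = ON := hON.symm
  have hup : S ≤ ON + γ * S := by
    have h1 : S ≤ (∑ i ∈ Finset.Icc (1:ℤ) T,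
        r i (fun k : Fin n => yhat (i - (n:ℤ) + ((k:ℕ):ℤ))) (yhat i))
        + γ * (∑ i ∈ Finset.Icc (1:ℤ) T, Λ (i+1)) := by
      calc S ≤ ∑ i ∈ Finset.Icc (1:ℤ) T,
            (r i (fun k : Fin n => yhat (i - (n:ℤ) + ((k:ℕ):ℤ))) (yhat i) + γ * Λ (i+1)) := by
            rw [hS]
            apply Finset.sum_le_sum
            intro i hi
            rw [Finset.mem_Icc] at hi
            exact hrec i hi.1 hi.2
        _ = _ := by rw [Finset.sum_add_distrib, ← Finset.mul_sum]
    have h6 : Λ (T+1) = 0 := by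
      simp only [hΛ]
      rw [if_neg (by omega)]
    have h7 : γ * (∑ i ∈ Finset.Icc (1:ℤ) T, Λ (i+1)) ≤ γ * S := by
      apply mul_le_mul_of_nonneg_left _ hγ0.le
      calc (∑ i ∈ Finset.Icc (1:ℤ) T, Λ (i+1))
          = ∑ t ∈ Finset.Icc ((1:ℤ)+1) (T+1), Λ t := (hshift 1 Λ 1 T).symm
        _ ≤ ∑ t ∈ Finset.Icc (1:ℤ) (T+1), Λ t :=
            Finset.sum_le_sum_of_subset_of_nonneg
              (Finset.Icc_subset_Icc (by norm_num) le_rfl) (fun t _ _ => hΛnn t)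
        _ = Λ (T+1) + S := by
            rw [hS, show Finset.Icc (1:ℤ) (T+1) = insert (T+1) (Finset.Icc 1 T) from by
              ext t; simp only [Finset.mem_insert, Finset.mem_Icc]; omega,
              Finset.sum_insert (by simp only [Finset.mem_Icc]; omega)]
        _ = S := by rw [h6, zero_add]
    linarith [h1, h7, hONs.le, hONs.ge]
  -- lower bound on S from the offline path
  have hlow : ∀ i : ℤ, 1 ≤ i → i ≤ T →
      (∑ j ∈ Finset.Icc n L, γ ^ j * F (i + (j:ℤ))) ≤ Λ i := by
    intro i hi1 hiT
    have hmax := hP3 i hi1 hiT (fun t => if t < i then yhat t else y t) (fun t ht => if_pos ht)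
    rw [hΛeq i hi1 hiT]
    have hsub : Finset.Icc n L ⊆ Finset.range (L+1) := by
      intro x hx
      rw [Finset.mem_Icc] at hx
      exact Finset.mem_range.2 (by omega)
    refine le_trans (le_trans (le_of_eq ?_)
      (Finset.sum_le_sum_of_subset_of_nonneg hsub
        (fun x _ _ => mul_nonneg (pow_nonneg hγ0.le _) (hrnn _ _ _)))) hmax
    apply Finset.sum_congr rfl
    intro j hj
    rw [Finset.mem_Icc] at hj
    have hj0 : (0:ℤ) ≤ (j:ℤ) := Int.natCast_nonneg _
    have hjn' : (n:ℤ) ≤ (j:ℤ) := by exact_mod_cast hj.1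
    have hhh : ∀ k : Fin n, (if i + (j:ℤ) - (n:ℤ) + ((k:ℕ):ℤ) < i
        then yhat (i + (j:ℤ) - (n:ℤ) + ((k:ℕ):ℤ)) else y (i + (j:ℤ) - (n:ℤ) + ((k:ℕ):ℤ)))
        = y (i + (j:ℤ) - (n:ℤ) + ((k:ℕ):ℤ)) := fun k =>
      if_neg (by have hk0 : (0:ℤ) ≤ ((k:ℕ):ℤ) := Int.natCast_nonneg _; omega)
    simp only [hF]
    simp only [hhh, if_neg (show ¬(i + (j:ℤ) < i) from by omega)]
  have hlowsum : (∑ j ∈ Finset.Icc n L, γ ^ j) * (∑ i ∈ Finset.Icc (1:ℤ) T, F i) ≤ S := by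
    have h1 : (∑ i ∈ Finset.Icc (1:ℤ) T, ∑ j ∈ Finset.Icc n L, γ ^ j * F (i + (j:ℤ))) ≤ S := by
      rw [hS]
      apply Finset.sum_le_sum
      intro i hi
      rw [Finset.mem_Icc] at hi
      exact hlow i hi.1 hi.2
    have h2 : (∑ i ∈ Finset.Icc (1:ℤ) T, ∑ j ∈ Finset.Icc n L, γ ^ j * F (i + (j:ℤ)))
        = ∑ j ∈ Finset.Icc n L, γ ^ j * (∑ i ∈ Finset.Icc (1:ℤ) T, F (i + (j:ℤ))) := by
      rw [Finset.sum_comm]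
      exact Finset.sum_congr rfl fun j _ => by rw [← Finset.mul_sum]
    have h3 : ∀ j ∈ Finset.Icc n L,
        (∑ i ∈ Finset.Icc (1:ℤ) T, F (i + (j:ℤ))) = ∑ i ∈ Finset.Icc (1:ℤ) T, F i := by
      intro j hj
      rw [Finset.mem_Icc] at hj
      have hj0 : (0:ℤ) ≤ (j:ℤ) := Int.natCast_nonneg _
      have hjL : ((j:ℕ):ℤ) ≤ (L:ℤ) := by exact_mod_cast hj.2
      calc (∑ i ∈ Finset.Icc (1:ℤ) T, F (i + (j:ℤ)))
          = ∑ t ∈ Finset.Icc ((1:ℤ)+(j:ℤ)) (T+(j:ℤ)), F t := (hshift (j:ℤ) F 1 T).symm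
        _ = ∑ t ∈ Finset.Icc ((L:ℤ)+2) (T - (L:ℤ) - 1), F t :=
            hcore (1+(j:ℤ)) (T+(j:ℤ)) (by omega) (by omega)
        _ = ∑ i ∈ Finset.Icc (1:ℤ) T, F i := (hcore 1 T (by omega) (by omega)).symm
    calc (∑ j ∈ Finset.Icc n L, γ ^ j) * (∑ i ∈ Finset.Icc (1:ℤ) T, F i)
        = ∑ j ∈ Finset.Icc n L, γ ^ j * (∑ i ∈ Finset.Icc (1:ℤ) T, F i) := by
          rw [Finset.sum_mul]
      _ = ∑ j ∈ Finset.Icc n L, γ ^ j * (∑ i ∈ Finset.Icc (1:ℤ) T, F (i + (j:ℤ))) :=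
          Finset.sum_congr rfl fun j hj => by rw [h3 j hj]
      _ = _ := h2.symm
      _ ≤ S := h1
  -- geometric sum identity
  have hsum : (∑ j ∈ Finset.range n, γ ^ j) + (∑ j ∈ Finset.Icc n L, γ ^ j)
      = ∑ j ∈ Finset.range (L+1), γ ^ j := by
    rw [Finset.range_eq_Ico, Finset.range_eq_Ico, ← Finset.Ico_add_one_right_eq_Icc]
    exact Finset.sum_Ico_consecutive (fun j => γ ^ j) (Nat.zero_le n) (show n ≤ L + 1 by omega)
  have hcg : (∑ j ∈ Finset.Icc n L, γ ^ j) * (1 - γ) = γ ^ n - γ ^ (L+1) := by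
    have h1 := geom_sum_mul γ n
    have h2 := geom_sum_mul γ (L+1)
    have h3 : ((∑ j ∈ Finset.range n, γ ^ j) + (∑ j ∈ Finset.Icc n L, γ ^ j)) * (γ - 1)
        = (∑ j ∈ Finset.range (L+1), γ ^ j) * (γ - 1) := by rw [hsum]
    linear_combination h1 - h2 - h3
  -- key inequality
  have hup' : (1 - γ) * S ≤ ON := by nlinarith [hup]
  have hkey : (γ ^ n - γ ^ (L+1)) * (∑ i ∈ Finset.Icc (1:ℤ) T, F i) ≤ ON := by
    have h1 : (1-γ) * ((∑ j ∈ Finset.Icc n L, γ ^ j) * (∑ i ∈ Finset.Icc (1:ℤ) T, F i))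
        ≤ (1-γ) * S := mul_le_mul_of_nonneg_left hlowsum (by linarith)
    calc (γ ^ n - γ ^ (L+1)) * (∑ i ∈ Finset.Icc (1:ℤ) T, F i)
        = (1-γ) * ((∑ j ∈ Finset.Icc n L, γ ^ j) * (∑ i ∈ Finset.Icc (1:ℤ) T, F i)) := by
          rw [← hcg]; ring
      _ ≤ (1-γ) * S := h1
      _ ≤ ON := hup'
  -- algebra with γ
  have hcast : ((L + 1 - n : ℕ) : ℝ) = d' := by
    rw [Nat.cast_sub (by omega), hd']
    push_cast
    ring
  have hγLn : γ ^ (L + 1 - n) = a := by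
    rw [hγ, ← Real.rpow_natCast (a ^ ((1:ℝ)/d')) (L + 1 - n), ← Real.rpow_mul ha0.le, hcast,
      one_div_mul_cancel hd'ne, Real.rpow_one]
  have hγn : γ ^ n = a ^ en := by
    rw [hγ, ← Real.rpow_natCast (a ^ ((1:ℝ)/d')) n, ← Real.rpow_mul ha0.le, hen]
    congr 1
    ring
  have hDprod : γ ^ n - γ ^ (L+1) = γ ^ n * (1 - a) := by
    rw [show L + 1 = n + (L + 1 - n) from by omega, pow_add, hγLn]
    ring
  have h1a : 1 - a = d' / ((L:ℝ) + 1) := by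
    rw [ha, hd']
    field_simp
    ring
  have hBa : (((L:ℝ)+1)/(n:ℝ)) ^ en * a ^ en = 1 := by
    rw [← Real.mul_rpow (by positivity) ha0.le,
      show ((L:ℝ)+1)/(n:ℝ) * a = 1 from by rw [ha]; field_simp]
    exact Real.one_rpow _
  have hCD : ((L:ℝ)+1)/d' * (((L:ℝ)+1)/(n:ℝ)) ^ en * (γ ^ n - γ ^ (L+1)) = 1 := by
    rw [hDprod, hγn, h1a]
    have hrw : ((L:ℝ)+1)/d' * (((L:ℝ)+1)/(n:ℝ)) ^ en * (a ^ en * (d'/((L:ℝ)+1)))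
        = ((((L:ℝ)+1)/(n:ℝ)) ^ en * a ^ en) * (((L:ℝ)+1)/d' * (d'/((L:ℝ)+1))) := by ring
    rw [hrw, hBa, one_mul, div_mul_div_comm, mul_comm ((L:ℝ)+1) d']
    exact div_self (mul_ne_zero hd'ne hL1ne)
  have hC0 : 0 ≤ ((L:ℝ)+1)/d' * (((L:ℝ)+1)/(n:ℝ)) ^ en :=
    mul_nonneg (div_nonneg (by linarith) hd'0.le)
      (Real.rpow_nonneg (div_nonneg (by linarith) hnR0.le) _)
  calc (∑ i ∈ Finset.Icc (1:ℤ) T, F i)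
      = ((L:ℝ)+1)/d' * (((L:ℝ)+1)/(n:ℝ)) ^ en
        * ((γ ^ n - γ ^ (L+1)) * ∑ i ∈ Finset.Icc (1:ℤ) T, F i) := by
        rw [← mul_assoc, hCD, one_mul]
    _ ≤ ((L:ℝ)+1)/d' * (((L:ℝ)+1)/(n:ℝ)) ^ en * ON :=
        mul_le_mul_of_nonneg_left hkey hC0
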